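/- Let A = ⟨Q, Σ⟩ be a DFA such that the iteratively constructed graph Γ(A) is strongly connected and Γ(A) = Γ_k(A). Then A is completely reachable; more precisely, for every non-empty subset P ⊆ Q there is a word w that is a product of words of defect at most k (possibly the empty product) such that P = Q·w. -/

import Mathlib

/-!
Framework: complete deterministic finite automata, reachability of subsets,
defect/excluded/duplicate states of words, and the layered graphs
`Γ₁(A), Γ₂(A), …` of Bondar & Volkov, "A Characterization of Completely
Reachable Automata".
-/

/-- The action of a word on a state: `q · w`. -/
def actWord {Q σ : Type*} (δ : Q → σ → Q) (w : List σ) (q : Q) : Q :=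
  w.foldl δ q

/-- The image of a set of states under a word: `P · w`. -/
def actSet {Q σ : Type*} (δ : Q → σ → Q) (w : List σ) (P : Set Q) : Set Q :=
  actWord δ w '' P

/-- The set `excl(w) = Q \ Q·w` of excluded states of the word `w`. -/
def excl {Q σ : Type*} (δ : Q → σ → Q) (w : List σ) : Set Q :=
  Set.univ \ actSet δ w Set.univ

/-- The defect of the word `w`, i.e. `|Q \ Q·w|`. -/
noncomputable def defect {Q σ : Type*} (δ : Q → σ → Q) (w : List σ) : ℕ :=
  (excl δ w).ncard

/-- The set `dupl(w)` of duplicate states of the word `w`. -/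
def dupl {Q σ : Type*} (δ : Q → σ → Q) (w : List σ) : Set Q :=
  {p | ∃ q₁ q₂ : Q, q₁ ≠ q₂ ∧ actWord δ w q₁ = p ∧ actWord δ w q₂ = p}

/-- A subset `P ⊆ Q` is reachable if `P = Q·w` for some word `w`. -/
def reachableSubset {Q σ : Type*} (δ : Q → σ → Q) (P : Set Q) : Prop :=
  ∃ w : List σ, actSet δ w Set.univ = P

/-- A DFA is completely reachable if every nonempty subset of states is reachable. -/
def completelyReachable {Q σ : Type*} (δ : Q → σ → Q) : Prop :=
  ∀ P : Set Q, P.Nonempty → reachableSubset δ P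

/-- A directed graph given by a vertex set and an edge relation. -/
structure DGraph (V : Type*) where
  verts : Set V
  edge : V → V → Prop

/-- Reachability by a directed path in a graph. -/
def GReach {V : Type*} (G : DGraph V) : V → V → Prop :=
  Relation.ReflTransGen G.edge

/-- A graph is strongly connected if each of its vertices is reachable from
any other one. -/
def StronglyConnected {V : Type*} (G : DGraph V) : Prop :=
  ∀ u ∈ G.verts, ∀ v ∈ G.verts, GReach G u v

/-- The strongly connected component of the vertex `v`: all vertices mutually
reachable with `v`. -/
def scc {V : Type*} (G : DGraph V) (v : V) : Set V :=
  {u | u ∈ G.verts ∧ GReach G u v ∧ GReach G v u}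

/-- Vertices of the layered graphs: states (`Sum.inl`) and subsets of states
(`Sum.inr`). -/
abbrev Vtx (Q : Type*) := Q ⊕ Set Q

/-- The support of a set of vertices: the states belonging to it. -/
def support {Q : Type*} (S : Set (Vtx Q)) : Set Q :=
  {q | Sum.inl q ∈ S}

/-- The graph `Γ₁(A)`: vertices are the states, and there is an edge
`(excl w, dupl w)` for each word `w` of defect 1. -/
def Gamma1 {Q σ : Type*} (δ : Q → σ → Q) : DGraph (Vtx Q) where
  verts := Set.range Sum.inl
  edge := fun u v => ∃ q p : Q, u = Sum.inl q ∧ v = Sum.inl p ∧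
    ∃ w : List σ, defect δ w = 1 ∧ excl δ w = {q} ∧ p ∈ dupl δ w

/-- `Qnext G k`: the collection of the supports of all SCCs of `G` of rank
at least `k` (this is the set `Q_k` when `G = Γ_{k-1}(A)`). -/
def Qnext {Q : Type*} (G : DGraph (Vtx Q)) (k : ℕ) : Set (Set Q) :=
  {C | ∃ v ∈ G.verts, C = support (scc G v) ∧ k ≤ C.ncard}

/-- One step of the iterative construction: from `G = Γ_{k-1}(A)` build
`Γ_k(A)` by adding the new vertices `Q_k`, the inclusion edges `I_k`, and the
edges `E_k` enforced by words of defect `k`. -/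
def step {Q σ : Type*} (δ : Q → σ → Q) (G : DGraph (Vtx Q)) (k : ℕ) :
    DGraph (Vtx Q) where
  verts := G.verts ∪ Sum.inr '' Qnext G k
  edge := fun u v =>
    G.edge u v ∨
    (∃ C ∈ Qnext G k, v = Sum.inr C ∧
      ((∃ q : Q, u = Sum.inl q ∧ q ∈ C) ∨
       (∃ D : Set Q, u = Sum.inr D ∧ Sum.inr D ∈ G.verts ∧ D ⊂ C))) ∨
    (∃ C ∈ Qnext G k, ∃ p : Q, u = Sum.inr C ∧ v = Sum.inl p ∧
      ∃ w : List σ, defect δ w = k ∧ excl δ w ⊆ C ∧ p ∈ dupl δ w)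

/-- The layered graphs `Γ_k(A)` (with `Γ_0 := Γ_1`). -/
def Gamma {Q σ : Type*} (δ : Q → σ → Q) : ℕ → DGraph (Vtx Q)
  | 0 => Gamma1 δ
  | 1 => Gamma1 δ
  | (k + 2) => step δ (Gamma δ (k + 1)) (k + 2)

/-- The FAILURE condition at step `k`: every SCC of `Γ_k(A)` has rank at
most `k`. -/
def failsAt {Q σ : Type*} (δ : Q → σ → Q) (k : ℕ) : Prop :=
  ∀ v ∈ (Gamma δ k).verts, (support (scc (Gamma δ k) v)).ncard ≤ k

/-- The iterative construction stops at step `k` (so `Γ(A) = Γ_k(A)`):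
`k` is the first index at which `Γ_k(A)` is strongly connected (SUCCESS) or
every SCC of `Γ_k(A)` has rank at most `k` (FAILURE). -/
def stopsAt {Q σ : Type*} (δ : Q → σ → Q) (k : ℕ) : Prop :=
  1 ≤ k ∧ (StronglyConnected (Gamma δ k) ∨ failsAt δ k) ∧
    ∀ j, 1 ≤ j → j < k → ¬ StronglyConnected (Gamma δ j) ∧ ¬ failsAt δ j

namespace BVAux

variable {Q σ : Type*}

lemma actWord_append (δ : Q → σ → Q) (a b : List σ) (q : Q) :
    actWord δ (a ++ b) q = actWord δ b (actWord δ a q) := by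
  simp [actWord]

lemma actSet_append (δ : Q → σ → Q) (a b : List σ) (P : Set Q) :
    actSet δ (a ++ b) P = actSet δ b (actSet δ a P) := by
  unfold actSet
  rw [Set.image_image]
  exact Set.image_congr fun q _ => actWord_append δ a b q

/-- goodness of a vertex with respect to a target set `P`. -/
def goodV (P : Set Q) : Vtx Q → Prop
  | Sum.inl q => q ∈ P
  | Sum.inr C => (C ∩ P).Nonempty

lemma inl_mem_verts (δ : Q → σ → Q) : ∀ (m : ℕ) (q : Q), Sum.inl q ∈ (Gamma δ m).verts
  | 0, q => ⟨q, rfl⟩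
  | 1, q => ⟨q, rfl⟩
  | (m+2), q => Or.inl (inl_mem_verts δ (m+1) q)

lemma inr_nonempty (δ : Q → σ → Q) : ∀ (m : ℕ) (D : Set Q),
    Sum.inr D ∈ (Gamma δ m).verts → D.Nonempty
  | 0, D, h => by rcases h with ⟨q, hq⟩; exact absurd hq (by simp)
  | 1, D, h => by rcases h with ⟨q, hq⟩; exact absurd hq (by simp)
  | (m+2), D, h => by
    rcases h with h | ⟨D', hD', hDD⟩
    · exact inr_nonempty δ (m+1) D h
    · obtain ⟨_, _, _, hcard⟩ := hD'
      have : D' = D := by simpa using hDD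
      subst this
      exact Set.nonempty_of_ncard_ne_zero (by omega)

lemma edge_elim (δ : Q → σ → Q) : ∀ (m : ℕ) (u v : Vtx Q), (Gamma δ m).edge u v →
    (Gamma1 δ).edge u v ∨
    ∃ j, 2 ≤ j ∧ j ≤ m ∧ ∃ C ∈ Qnext (Gamma δ (j-1)) j,
      ((v = Sum.inr C ∧ ((∃ q : Q, u = Sum.inl q ∧ q ∈ C) ∨
          (∃ D : Set Q, u = Sum.inr D ∧ D.Nonempty ∧ D ⊆ C)))
       ∨ (u = Sum.inr C ∧ ∃ p : Q, v = Sum.inl p ∧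
          ∃ w : List σ, defect δ w = j ∧ excl δ w ⊆ C ∧ p ∈ dupl δ w))
  | 0, u, v, h => Or.inl h
  | 1, u, v, h => Or.inl h
  | (m+2), u, v, h => by
    rcases h with h | ⟨C, hC, hv, hu⟩ | ⟨C, hC, p, hu, hv, w, hw⟩
    · rcases edge_elim δ (m+1) u v h with h1 | ⟨j, hj2, hjm, rest⟩
      · exact Or.inl h1
      · exact Or.inr ⟨j, hj2, by omega, rest⟩
    · refine Or.inr ⟨m+2, by omega, le_refl _, C, hC, Or.inl ⟨hv, ?_⟩⟩
      rcases hu with ⟨q, hq, hqC⟩ | ⟨D, hD, hDv, hDC⟩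
      · exact Or.inl ⟨q, hq, hqC⟩
      · exact Or.inr ⟨D, hD, inr_nonempty δ (m+1) D hDv, hDC.1⟩
    · exact Or.inr ⟨m+2, by omega, le_refl _, C, hC, Or.inr ⟨hu, p, hv, w, hw⟩⟩

lemma cross (δ : Q → σ → Q) (k : ℕ) (hk : 1 ≤ k) (P : Set Q) :
    ∀ m, m ≤ k → ∀ u v : Vtx Q, GReach (Gamma δ m) u v →
      ¬ goodV P u → goodV P v →
      ∃ w : List σ, defect δ w ≤ k ∧ excl δ w ∩ P = ∅ ∧ (dupl δ w ∩ P).Nonempty := by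
  intro m
  induction m using Nat.strong_induction_on with
  | _ m ih =>
    intro hmk u v hpath
    induction hpath with
    | refl => intro hu hv; exact absurd hv hu
    | @tail b c hab hbc ih2 =>
      intro hu hv
      by_cases hb : goodV P b
      · exact ih2 hu hb
      · rcases edge_elim δ m b c hbc with
          ⟨q, p, hbq, hcp, w, hw1, hw2, hw3⟩ | ⟨j, hj2, hjm, C, hCQ, hcase⟩
        · subst hbq; subst hcp
          refine ⟨w, by omega, ?_, p, hw3, hv⟩
          rw [hw2]
          exact Set.singleton_inter_eq_empty.mpr hb
        · rcases hcase with ⟨hcC, hin⟩ | ⟨hbC, p, hcp, w, hw1, hw2, hw3⟩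
          · subst hcC
            have hCP : (C ∩ P).Nonempty := hv
            obtain ⟨q', hq'C, hq'P⟩ : ∃ q', q' ∈ C ∧ q' ∉ P := by
              rcases hin with ⟨q, hbq, hqC⟩ | ⟨D, hbD, hDne, hDC⟩
              · subst hbq; exact ⟨q, hqC, hb⟩
              · subst hbD
                obtain ⟨d, hd⟩ := hDne
                exact ⟨d, hDC hd, fun hdP => hb ⟨d, hd, hdP⟩⟩
            obtain ⟨p', hp'C, hp'P⟩ := hCP
            obtain ⟨v₀, hv₀, hCsupp, _⟩ := hCQ
            rw [hCsupp] at hq'C hp'C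
            have hq'scc : Sum.inl q' ∈ scc (Gamma δ (j-1)) v₀ := hq'C
            have hp'scc : Sum.inl p' ∈ scc (Gamma δ (j-1)) v₀ := hp'C
            have hreach : GReach (Gamma δ (j-1)) (Sum.inl q') (Sum.inl p') :=
              hq'scc.2.1.trans hp'scc.2.2
            exact ih (j-1) (by omega) (by omega) _ _ hreach hq'P hp'P
          · subst hbC; subst hcp
            refine ⟨w, by omega, ?_, p, hw3, hv⟩
            have hCemp : C ∩ P = ∅ := Set.not_nonempty_iff_eq_empty.mp hb
            exact Set.eq_empty_of_subset_empty
              (hCemp ▸ Set.inter_subset_inter_left P hw2)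

lemma card_lt [Fintype Q] (f : Q → Q) (P : Set Q) (hP : P ⊆ Set.range f)
    (p : Q) (hp : p ∈ P) (q₁ q₂ : Q) (hne : q₁ ≠ q₂) (h1 : f q₁ = p) (h2 : f q₂ = p) :
    (Set.univ \ (f ⁻¹' P)).ncard < (Set.univ \ P).ncard := by
  set S := f ⁻¹' P with hSdef
  have hq₁ : q₁ ∈ S := by simp [hSdef, h1, hp]
  have hq₂ : q₂ ∈ S := by simp [hSdef, h2, hp]
  have himg : f '' S = P := Set.image_preimage_eq_of_subset hP
  have himg2 : f '' (S \ {q₁}) = P := by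
    apply Set.Subset.antisymm
    · rw [← himg]; exact Set.image_mono (f := f) Set.diff_subset
    · intro x hx
      rw [← himg] at hx
      obtain ⟨y, hyS, hyx⟩ := hx
      by_cases hy : y = q₁
      · exact ⟨q₂, ⟨hq₂, by simp [hne.symm]⟩, by rw [h2, ← h1, ← hy, hyx]⟩
      · exact ⟨y, ⟨hyS, by simp [hy]⟩, hyx⟩
  have h3 : P.ncard < S.ncard := by
    have hle : (f '' (S \ {q₁})).ncard ≤ (S \ {q₁}).ncard := Set.ncard_image_le
    rw [himg2] at hle
    have hd : (S \ {q₁}).ncard = S.ncard - 1 := Set.ncard_diff_singleton_of_mem hq₁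
    have hpos : 0 < S.ncard := (Set.ncard_pos (Set.toFinite S)).mpr ⟨q₁, hq₁⟩
    omega
  have hSle : S.ncard ≤ (Set.univ : Set Q).ncard :=
    Set.ncard_le_ncard (Set.subset_univ S) Set.finite_univ
  have e1 : (Set.univ \ S).ncard = (Set.univ : Set Q).ncard - S.ncard :=
    Set.ncard_diff (Set.subset_univ S)
  have e2 : (Set.univ \ P).ncard = (Set.univ : Set Q).ncard - P.ncard :=
    Set.ncard_diff (Set.subset_univ P)
  omega

end BVAux


/-- Theorem 3: if the construction stops at step `k` (i.e.
`Γ(A) = Γ_k(A)`) and `Γ(A)` is strongly connected, then `A` is completely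
reachable; more precisely, every non-empty subset `P ⊆ Q` satisfies `P = Q·w`
for some product `w` of words of defect at most `k`. -/
theorem gamma_strongly_connected_completely_reachable
    {Q σ : Type*} [Fintype Q] (δ : Q → σ → Q) (k : ℕ)
    (hstop : stopsAt δ k) (hsc : StronglyConnected (Gamma δ k)) :
    completelyReachable δ ∧
      ∀ P : Set Q, P.Nonempty →
        ∃ ws : List (List σ), (∀ u ∈ ws, defect δ u ≤ k) ∧
          actSet δ ws.flatten Set.univ = P := by
  obtain ⟨hk, -, -⟩ := hstop
  have key : ∀ n (P : Set Q), (Set.univ \ P).ncard = n → P.Nonempty →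
      ∃ ws : List (List σ), (∀ u ∈ ws, defect δ u ≤ k) ∧
        actSet δ ws.flatten Set.univ = P := by
    intro n
    induction n using Nat.strong_induction_on with
    | _ n ihn =>
      intro P hn hPne
      by_cases hPu : P = Set.univ
      · subst hPu
        exact ⟨[], by simp, by ext x; exact ⟨fun _ => trivial, fun _ => ⟨x, trivial, rfl⟩⟩⟩
      · obtain ⟨q, hqP⟩ : ∃ q, q ∉ P := by
          by_contra h
          push_neg at h
          exact hPu (Set.eq_univ_of_forall h)
        obtain ⟨p, hpP⟩ := hPne
        have hreach : GReach (Gamma δ k) (Sum.inl q) (Sum.inl p) :=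
          hsc _ (BVAux.inl_mem_verts δ k q) _ (BVAux.inl_mem_verts δ k p)
        obtain ⟨w, hwk, hwex, p₀, hp₀d, hp₀P⟩ :=
          BVAux.cross δ k hk P k le_rfl _ _ hreach hqP hpP
        obtain ⟨q₁, q₂, hne, h1, h2⟩ := hp₀d
        have hPr : P ⊆ Set.range (actWord δ w) := by
          intro x hx
          by_contra hxr
          have hxe : x ∈ excl δ w :=
            ⟨Set.mem_univ x, by simpa [actSet, Set.image_univ] using hxr⟩
          have : x ∈ excl δ w ∩ P := ⟨hxe, hx⟩
          rw [hwex] at this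
          exact this
        have hlt := BVAux.card_lt (actWord δ w) P hPr p₀ hp₀P q₁ q₂ hne h1 h2
        obtain ⟨ws, hws1, hws2⟩ :=
          ihn _ (hn ▸ hlt) (actWord δ w ⁻¹' P) rfl
            ⟨q₁, by simp only [Set.mem_preimage, h1]; exact hp₀P⟩
        refine ⟨ws ++ [w], ?_, ?_⟩
        · intro u hu
          rcases List.mem_append.mp hu with h | h
          · exact hws1 u h
          · rw [List.mem_singleton.mp h]; exact hwk
        · rw [List.flatten_append]
          have hfl : [w].flatten = w := by simp
          rw [hfl, BVAux.actSet_append, hws2]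
          exact Set.image_preimage_eq_of_subset hPr
  refine ⟨?_, fun P hP => key _ P rfl hP⟩
  intro P hP
  obtain ⟨ws, -, h2⟩ := key _ P rfl hP
  exact ⟨ws.flatten, h2⟩
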